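/- Let ω = e^{2πi/p}. For every b ∈ F_r^* and every a ∈ F_{q^2}, Σ_{x∈F_{q^2}} ω^{Tr_{q/p}(b·x^{q+1}) + Tr_{q^2/p}(a·x)} = −q·ω^{−Tr_{q/p}(a^{q+1}·b^{−1})}. Moreover, for b = 0 and any a ∈ F_{q^2}^*, the sum Σ_{x∈F_{q^2}} ω^{Tr_{q^2/p}(a·x)} equals 0. -/
import Mathlib

open Finset

private lemma aux_all_eq {α : Type*} (s : Finset α) (n : α → ℕ) (K : ℕ)
    (hle : ∀ u ∈ s, n u ≤ K) (hsum : ∑ u ∈ s, n u = s.card * K) : ∀ u ∈ s, n u = K := by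
  by_contra h
  push_neg at h
  obtain ⟨u0, hu0, hne⟩ := h
  have hlt : ∑ u ∈ s, n u < ∑ _u ∈ s, K :=
    Finset.sum_lt_sum hle ⟨u0, hu0, lt_of_le_of_ne (hle u0 hu0) hne⟩
  rw [Finset.sum_const, smul_eq_mul] at hlt
  omega

private lemma aux_sum_char_zero {p : ℕ} [Fact p.Prime] (F : Type) [Field F] [Fintype F]
    [Algebra (ZMod p) F] (ψ : ZMod p → ℂ)
    (hmul : ∀ c d : ZMod p, ψ (c + d) = ψ c * ψ d)
    (hone : ∀ c : ZMod p, ψ c = 1 → c = 0) (a : F) (ha : a ≠ 0) :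
    ∑ x : F, ψ (Algebra.trace (ZMod p) F (a * x)) = 0 := by
  haveI hchar : CharP F p := charP_of_injective_algebraMap (algebraMap (ZMod p) F).injective p
  have hpr : p = ringChar F := (ringChar.eq F p).symm
  subst hpr
  obtain ⟨y, hy⟩ := FiniteField.trace_to_zmod_nondegenerate F ha
  set T := ∑ x : F, ψ (Algebra.trace (ZMod (ringChar F)) F (a * x)) with hT
  have key : ψ (Algebra.trace (ZMod (ringChar F)) F (a * y)) * T = T := by
    rw [hT, Finset.mul_sum]
    calc ∑ x : F, ψ (Algebra.trace (ZMod (ringChar F)) F (a * y)) *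
            ψ (Algebra.trace (ZMod (ringChar F)) F (a * x))
        = ∑ x : F, ψ (Algebra.trace (ZMod (ringChar F)) F (a * (y + x))) := by
          refine Finset.sum_congr rfl fun x _ => ?_
          rw [← hmul, mul_add, map_add]
      _ = ∑ x : F, ψ (Algebra.trace (ZMod (ringChar F)) F (a * x)) :=
          Equiv.sum_comp (Equiv.addLeft y)
            (fun x => ψ (Algebra.trace (ZMod (ringChar F)) F (a * x)))
  have h0 : (ψ (Algebra.trace (ZMod (ringChar F)) F (a * y)) - 1) * T = 0 := by
    rw [sub_mul, one_mul, key, sub_self]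
  rcases mul_eq_zero.mp h0 with h | h
  · exact absurd (hone _ (sub_eq_zero.mp h)) hy
  · exact h

theorem stmt12 (p t s : ℕ) [Fact p.Prime] (hp2 : Odd p) (ht : 0 < t) (hs : 0 < s)
    (Fr Fq Fq2 : Type) [Field Fr] [Fintype Fr]
    [Field Fq] [Fintype Fq] [Field Fq2] [Fintype Fq2]
    [Algebra (ZMod p) Fq] [Algebra (ZMod p) Fq2] [Algebra Fr Fq] [Algebra Fq Fq2]
    (hr : Fintype.card Fr = p ^ t) (hq : Fintype.card Fq = (p ^ t) ^ s)
    (hq2 : Fintype.card Fq2 = ((p ^ t) ^ s) ^ 2)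
    (N : Fq2 → Fq) (hN : ∀ x : Fq2, algebraMap Fq Fq2 (N x) = x ^ (Fintype.card Fq + 1))
    (ω : ℂ) (hω : ω = Complex.exp (2 * Real.pi * Complex.I / (p : ℂ))) :
    (∀ b : Fr, b ≠ 0 → ∀ a : Fq2,
      ∑ x : Fq2, ω ^ ((Algebra.trace (ZMod p) Fq (algebraMap Fr Fq b * N x) +
          Algebra.trace (ZMod p) Fq2 (a * x)).val) =
        -(((p : ℂ) ^ t) ^ s) *
          ω ^ ((-(Algebra.trace (ZMod p) Fq (N a * algebraMap Fr Fq b⁻¹))).val)) ∧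
    (∀ a : Fq2, a ≠ 0 →
      ∑ x : Fq2, ω ^ ((Algebra.trace (ZMod p) Fq2 (a * x)).val) = 0) := by
  classical
  have hp : p.Prime := Fact.out
  have hp0 : p ≠ 0 := hp.ne_zero
  have hp2' : p ≠ 2 := by
    rintro rfl
    exact (Nat.not_even_iff_odd.mpr hp2) even_two
  -- the character
  set ψ : ZMod p → ℂ := fun c => ω ^ c.val with hψdef
  have hωp : ω ^ p = 1 := by
    rw [hω, ← Complex.exp_nat_mul]
    have hpc : (p : ℂ) ≠ 0 := Nat.cast_ne_zero.mpr hp0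
    rw [show (p : ℂ) * (2 * Real.pi * Complex.I / (p : ℂ)) = 2 * Real.pi * Complex.I by
      field_simp]
    exact Complex.exp_two_pi_mul_I
  have hprim : IsPrimitiveRoot ω p := by
    rw [hω]; exact Complex.isPrimitiveRoot_exp p hp0
  have hmul : ∀ c d : ZMod p, ψ (c + d) = ψ c * ψ d := by
    intro c d
    show ω ^ (c + d).val = ω ^ c.val * ω ^ d.val
    rw [ZMod.val_add, ← pow_add]
    conv_rhs => rw [← Nat.div_add_mod (c.val + d.val) p]
    rw [pow_add, pow_mul, hωp, one_pow, one_mul]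
  have hone : ∀ c : ZMod p, ψ c = 1 → c = 0 := by
    intro c hc
    have hd : p ∣ c.val := (hprim.pow_eq_one_iff_dvd c.val).mp hc
    have hv : c.val = 0 := Nat.eq_zero_of_dvd_of_lt hd (ZMod.val_lt c)
    exact (ZMod.val_eq_zero c).mp hv
  have hψ0 : ψ 0 = 1 := by
    show ω ^ (0 : ZMod p).val = 1
    simp
  -- instances
  haveI : CharP Fq2 p := charP_of_injective_algebraMap (algebraMap (ZMod p) Fq2).injective p
  haveI : IsScalarTower (ZMod p) Fq Fq2 :=
    IsScalarTower.of_algebraMap_eq fun x =>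
      RingHom.congr_fun
        (RingHom.ext_zmod (algebraMap (ZMod p) Fq2)
          ((algebraMap Fq Fq2).comp (algebraMap (ZMod p) Fq))) x
  -- part 2 and the generic sum lemma
  have hsumF : ∀ (B : Fq), B ≠ 0 →
      ∑ u : Fq, ψ (Algebra.trace (ZMod p) Fq (B * u)) = 0 :=
    fun B hB => aux_sum_char_zero Fq ψ hmul hone B hB
  have part2 : ∀ a : Fq2, a ≠ 0 →
      ∑ x : Fq2, ω ^ ((Algebra.trace (ZMod p) Fq2 (a * x)).val) = 0 :=
    fun a ha => aux_sum_char_zero Fq2 ψ hmul hone a ha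
  refine ⟨?_, part2⟩
  -- abbreviations
  set q' := Fintype.card Fq with hq'def
  have hq1 : 1 < q' := Fintype.one_lt_card
  have hcard2 : Fintype.card Fq2 = q' ^ 2 := by rw [hq2, hq]
  have hqpow : q' = p ^ (t * s) := by rw [hq, ← pow_mul]
  -- finrank
  have hfr : Module.finrank Fq Fq2 = 2 := by
    have h := Module.card_eq_pow_finrank (K := Fq) (V := Fq2)
    rw [hcard2] at h
    exact (Nat.pow_right_injective hq1 h).symm
  have htr : ∀ w : Fq, Algebra.trace (ZMod p) Fq2 (algebraMap Fq Fq2 w) =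
      2 * Algebra.trace (ZMod p) Fq w := by
    intro w
    rw [← Algebra.trace_trace (S := Fq), Algebra.trace_algebraMap, hfr]
    rw [map_nsmul]
    rw [nsmul_eq_mul]
    norm_num
  -- Frobenius invariance of the absolute trace on Fq2
  haveI : ExpChar Fq2 p := ExpChar.prime hp
  have hfrobalg : ∀ z : Fq2,
      Algebra.trace (ZMod p) Fq2 (z ^ p) = Algebra.trace (ZMod p) Fq2 z := by
    intro z
    let e : Fq2 ≃ₐ[ZMod p] Fq2 :=
      AlgEquiv.ofRingEquiv (f := frobeniusEquiv Fq2 p) (fun c => by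
        show algebraMap (ZMod p) Fq2 c ^ p = algebraMap (ZMod p) Fq2 c
        rw [← map_pow, ZMod.pow_card])
    exact Algebra.trace_eq_of_algEquiv e z
  have hfrobk : ∀ (k : ℕ) (z : Fq2),
      Algebra.trace (ZMod p) Fq2 (z ^ p ^ k) = Algebra.trace (ZMod p) Fq2 z := by
    intro k
    induction k with
    | zero => intro z; simp
    | succ k ih =>
      intro z
      rw [pow_succ, pow_mul, hfrobalg, ih]
  -- the fiber count for N
  have hNeq : ∀ (y : Fq2) (u : Fq), N y = u ↔ y ^ (q' + 1) = algebraMap Fq Fq2 u := by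
    intro y u
    constructor
    · intro h; rw [← hN, h]
    · intro h; exact (algebraMap Fq Fq2).injective (by rw [hN, h])
  set n : Fq → ℕ := fun u => ({y : Fq2 | N y = u} : Finset Fq2).card with hndef
  have htot : ∑ u : Fq, n u = q' ^ 2 := by
    rw [← hcard2, ← Finset.card_univ,
      Finset.card_eq_sum_card_fiberwise (fun x _ => Finset.mem_univ (N x))]
  have hn0 : n 0 = 1 := by
    have h : ({y : Fq2 | N y = 0} : Finset Fq2) = {0} := by
      ext y
      simp only [Finset.mem_filter, Finset.mem_univ, true_and, Finset.mem_singleton]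
      rw [hNeq y 0, map_zero, pow_eq_zero_iff (Nat.succ_ne_zero q')]
    rw [hndef]; simp only [h, Finset.card_singleton]
  have hle : ∀ u : Fq, n u ≤ q' + 1 := by
    intro u
    have hsub : ({y : Fq2 | N y = u} : Finset Fq2) ⊆
        (Polynomial.nthRoots (q' + 1) (algebraMap Fq Fq2 u)).toFinset := by
      intro y hy
      rw [Finset.mem_filter] at hy
      rw [Multiset.mem_toFinset, Polynomial.mem_nthRoots (Nat.succ_pos q')]
      exact (hNeq y u).mp hy.2
    calc n u ≤ (Polynomial.nthRoots (q' + 1) (algebraMap Fq Fq2 u)).toFinset.card :=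
          Finset.card_le_card hsub
      _ ≤ Multiset.card (Polynomial.nthRoots (q' + 1) (algebraMap Fq Fq2 u)) :=
          Multiset.toFinset_card_le _
      _ ≤ q' + 1 := Polynomial.card_nthRoots _ _
  have hfib : ∀ u ∈ (Finset.univ : Finset Fq).erase 0, n u = q' + 1 := by
    apply aux_all_eq
    · intro u _; exact hle u
    · have hsum_erase : n 0 + ∑ u ∈ (Finset.univ : Finset Fq).erase 0, n u
          = ∑ u : Fq, n u := Finset.add_sum_erase _ _ (Finset.mem_univ 0)
      have hcard_erase : ((Finset.univ : Finset Fq).erase 0).card = q' - 1 := by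
        rw [Finset.card_erase_of_mem (Finset.mem_univ 0), Finset.card_univ]
      rw [hcard_erase]
      have : ∑ u ∈ (Finset.univ : Finset Fq).erase 0, n u = q' ^ 2 - 1 := by omega
      rw [this]
      have h1q : 1 ≤ q' := le_of_lt hq1
      have key : (q' - 1) * (q' + 1) + 1 = q' ^ 2 := by
        rcases Nat.exists_eq_add_of_le h1q with ⟨m, hm⟩
        rw [hm, Nat.add_sub_cancel_left]
        ring
      omega
  -- the quadratic character-free Gauss-type sum
  have hS : ∀ B : Fq, B ≠ 0 →
      ∑ y : Fq2, ψ (Algebra.trace (ZMod p) Fq (B * N y)) = -(q' : ℂ) := by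
    intro B hB
    have h1 : ∑ y : Fq2, ψ (Algebra.trace (ZMod p) Fq (B * N y))
        = ∑ u : Fq, (n u : ℂ) * ψ (Algebra.trace (ZMod p) Fq (B * u)) := by
      rw [← Finset.sum_fiberwise Finset.univ N
        (fun y => ψ (Algebra.trace (ZMod p) Fq (B * N y)))]
      refine Finset.sum_congr rfl fun u _ => ?_
      have hconst : ∑ y ∈ ({y : Fq2 | N y = u} : Finset Fq2),
            ψ (Algebra.trace (ZMod p) Fq (B * N y))
          = ∑ _y ∈ ({y : Fq2 | N y = u} : Finset Fq2),
            ψ (Algebra.trace (ZMod p) Fq (B * u)) :=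
        Finset.sum_congr rfl fun y hy => by rw [(Finset.mem_filter.mp hy).2]
      rw [hconst, Finset.sum_const, nsmul_eq_mul]
    rw [h1]
    have h2 : ∑ u ∈ (Finset.univ : Finset Fq).erase 0,
        (n u : ℂ) * ψ (Algebra.trace (ZMod p) Fq (B * u))
        = ((q' : ℂ) + 1) * ∑ u ∈ (Finset.univ : Finset Fq).erase 0,
            ψ (Algebra.trace (ZMod p) Fq (B * u)) := by
      rw [Finset.mul_sum]
      refine Finset.sum_congr rfl fun u hu => ?_
      rw [hfib u hu]
      push_cast
      ring
    have h3 : ∑ u ∈ (Finset.univ : Finset Fq).erase 0,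
        ψ (Algebra.trace (ZMod p) Fq (B * u)) = -1 := by
      have h4 : ψ (Algebra.trace (ZMod p) Fq (B * 0))
            + ∑ u ∈ (Finset.univ : Finset Fq).erase 0,
              ψ (Algebra.trace (ZMod p) Fq (B * u))
          = ∑ u : Fq, ψ (Algebra.trace (ZMod p) Fq (B * u)) :=
        Finset.add_sum_erase _ (fun u => ψ (Algebra.trace (ZMod p) Fq (B * u)))
          (Finset.mem_univ 0)
      rw [hsumF B hB, mul_zero, map_zero, hψ0] at h4
      linear_combination h4
    have hsplit : ∑ u : Fq, (n u : ℂ) * ψ (Algebra.trace (ZMod p) Fq (B * u))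
        = (n 0 : ℂ) * ψ (Algebra.trace (ZMod p) Fq (B * 0))
          + ∑ u ∈ (Finset.univ : Finset Fq).erase 0,
              (n u : ℂ) * ψ (Algebra.trace (ZMod p) Fq (B * u)) :=
      (Finset.add_sum_erase _ (fun u => (n u : ℂ) * ψ (Algebra.trace (ZMod p) Fq (B * u)))
        (Finset.mem_univ 0)).symm
    rw [hsplit, h2, h3, hn0, mul_zero, map_zero, hψ0]
    push_cast
    ring
  -- main computation
  intro b hb a
  set g : Fq →+* Fq2 := algebraMap Fq Fq2 with hgdef
  set B : Fq := algebraMap Fr Fq b with hBdef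
  have hB : B ≠ 0 := fun h => hb ((algebraMap Fr Fq).injective (by rw [← hBdef, h, map_zero]))
  have hgB : g B ≠ 0 := fun h => hB (g.injective (by rw [h, map_zero]))
  set c : Fq2 := a ^ q' * (g B)⁻¹ with hcdef
  set v : Fq := N a * B⁻¹ with hvdef
  have hBq : (g B) ^ q' = g B := by rw [← map_pow, FiniteField.pow_card]
  have haq2 : a ^ (q' * q') = a := by
    have := FiniteField.pow_card a
    rwa [hcard2, pow_two] at this
  have hc1 : g B * c = a ^ q' := by
    rw [hcdef, mul_comm (a ^ q') ((g B)⁻¹), ← mul_assoc, mul_inv_cancel₀ hgB, one_mul]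
  have hc2 : g B * c ^ q' = a := by
    have hcq : (a ^ q' * (g B)⁻¹) ^ q' = a ^ (q' * q') * (g B)⁻¹ := by
      rw [mul_pow, ← pow_mul, inv_pow, hBq]
    rw [hcdef, hcq, haq2, mul_comm a ((g B)⁻¹), ← mul_assoc, mul_inv_cancel₀ hgB, one_mul]
  have hc3 : a * c = g v := by
    rw [hvdef, map_mul, map_inv₀, hN a, hcdef, pow_succ]
    ring
  have hsubpow : ∀ z w : Fq2, (z - w) ^ q' = z ^ q' - w ^ q' := by
    intro z w
    rw [hqpow]
    exact sub_pow_char_pow z w (t * s)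
  have hii : ∀ y : Fq2, g (B * N (y - c))
      = g (B * N y) - a ^ q' * y ^ q' - a * y + g v := by
    intro y
    rw [map_mul, map_mul, hN, hN, pow_succ, pow_succ, hsubpow y c]
    linear_combination (-(y ^ q')) * hc1 + (c - y) * hc2 + hc3
  have h2ne : (2 : ZMod p) ≠ 0 := by
    intro h
    rw [show (2 : ZMod p) = ((2 : ℕ) : ZMod p) by norm_cast] at h
    rw [ZMod.natCast_eq_zero_iff] at h
    have := Nat.le_of_dvd (by norm_num) h
    have := hp.two_le
    omega
  have hclaim : ∀ y : Fq2,
      Algebra.trace (ZMod p) Fq (B * N (y - c)) + Algebra.trace (ZMod p) Fq2 (a * (y - c))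
        = Algebra.trace (ZMod p) Fq (B * N y) + -(Algebra.trace (ZMod p) Fq v) := by
    intro y
    apply mul_left_cancel₀ h2ne
    have e1 := htr (B * N (y - c))
    rw [hii y, map_add, map_sub, map_sub] at e1
    have e2 := htr (B * N y)
    have e3 := htr v
    have e4 : Algebra.trace (ZMod p) Fq2 (a ^ q' * y ^ q')
        = Algebra.trace (ZMod p) Fq2 (a * y) := by
      rw [← mul_pow, hqpow]
      exact hfrobk (t * s) (a * y)
    have e5 : a * (y - c) = a * y - g v := by rw [mul_sub, hc3]
    rw [e5, map_sub]
    linear_combination -e1 + e2 - e3 - e4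
  -- reindex and conclude
  calc ∑ x : Fq2, ω ^ ((Algebra.trace (ZMod p) Fq (B * N x)
          + Algebra.trace (ZMod p) Fq2 (a * x)).val)
      = ∑ y : Fq2, ψ (Algebra.trace (ZMod p) Fq (B * N (y - c))
          + Algebra.trace (ZMod p) Fq2 (a * (y - c))) :=
        (Equiv.sum_comp (Equiv.subRight c) (fun x : Fq2 =>
          ψ (Algebra.trace (ZMod p) Fq (B * N x)
            + Algebra.trace (ZMod p) Fq2 (a * x)))).symm
    _ = ∑ y : Fq2, ψ (Algebra.trace (ZMod p) Fq (B * N y))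
          * ψ (-(Algebra.trace (ZMod p) Fq v)) := by
        refine Finset.sum_congr rfl fun y _ => ?_
        rw [hclaim y, hmul]
    _ = -(((p : ℂ) ^ t) ^ s) * ω ^ ((-(Algebra.trace (ZMod p) Fq v)).val) := by
        rw [← Finset.sum_mul, hS B hB]
        have : (q' : ℂ) = ((p : ℂ) ^ t) ^ s := by rw [hq]; push_cast; ring
        rw [this]
    _ = -(((p : ℂ) ^ t) ^ s)
          * ω ^ ((-(Algebra.trace (ZMod p) Fq (N a * algebraMap Fr Fq b⁻¹))).val) := by
        rw [hvdef, map_inv₀, hBdef]
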